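/- Let μ : A* → A* be a substitution, k ≥ 0 an integer, m ∈ A* and a ∈ A such that m is a proper prefix of μ^k(a). Then there exists a unique a-admissible sequence ((m_i, a_i))_{i=0,...,k-1} such that m = μ^{k-1}(m_{k-1})·μ^{k-2}(m_{k-2})···μ^0(m_0). -/
import Mathlib


/-- `substApp μ n w` is `μ^n(w)`: the `n`-fold application of the substitution `μ`
(extended to words by concatenation) to the word `w`. -/
def substApp {A : Type*} (μ : A → List A) (n : ℕ) (w : List A) : List A :=
  (fun v => v.flatMap μ)^[n] w

/-- A sequence `((m_i, a_i))_{i=0,...,k-1}` is admissible with respect to `μ` if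
`m_{i-1} a_{i-1}` is a prefix of `μ(a_i)` for every `1 ≤ i ≤ k-1`. -/
def Admissible {A : Type*} (μ : A → List A) (k : ℕ) (s : Fin k → List A × A) : Prop :=
  ∀ i : Fin k, 0 < i.val →
    ((s ⟨i.val - 1, by have := i.isLt; omega⟩).1 ++
      [(s ⟨i.val - 1, by have := i.isLt; omega⟩).2]) <+: μ (s i).2

/-- A sequence `((m_i, a_i))_{i=0,...,k-1}` is `a`-admissible with respect to `μ`
if it is admissible and moreover `m_{k-1} a_{k-1}` is a prefix of `μ(a)`. -/
def LetterAdmissible {A : Type*} (μ : A → List A) (a : A) (k : ℕ)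
    (s : Fin k → List A × A) : Prop :=
  Admissible μ k s ∧ ∀ h : 0 < k,
    ((s ⟨k - 1, by omega⟩).1 ++ [(s ⟨k - 1, by omega⟩).2]) <+: μ a

/-- The word `μ^{k-1}(m_{k-1}) · μ^{k-2}(m_{k-2}) ⋯ μ^0(m_0)` associated with a
sequence `((m_i, a_i))_{i=0,...,k-1}`. -/
def dtProd {A : Type*} (μ : A → List A) (k : ℕ) (s : Fin k → List A × A) : List A :=
  ((List.ofFn fun i : Fin k => substApp μ i.val (s i).1)).reverse.flatten

section AuxLemmas
variable {A : Type*}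
variable {A : Type*}

lemma substApp_succ (μ : A → List A) (n : ℕ) (w : List A) :
    substApp μ (n+1) w = substApp μ n (w.flatMap μ) := by
  simp [substApp, Function.iterate_succ_apply]

lemma substApp_append (μ : A → List A) (n : ℕ) (u v : List A) :
    substApp μ n (u ++ v) = substApp μ n u ++ substApp μ n v := by
  induction n generalizing u v with
  | zero => rfl
  | succ n ih => rw [substApp_succ, substApp_succ, substApp_succ, List.flatMap_append, ih]

lemma substApp_nil (μ : A → List A) (n : ℕ) : substApp μ n [] = [] := by
  induction n with
  | zero => rfl
  | succ n ih => rw [substApp_succ]; simpa using ih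

lemma substApp_succ_singleton (μ : A → List A) (n : ℕ) (a : A) :
    substApp μ (n+1) [a] = substApp μ n (μ a) := by
  rw [substApp_succ]; simp

lemma substApp_singleton_ne_nil (μ : A → List A) (hne : ∀ c, μ c ≠ []) (n : ℕ) (a : A) :
    substApp μ n [a] ≠ [] := by
  induction n generalizing a with
  | zero => simp [substApp]
  | succ n ih =>
    rw [substApp_succ_singleton]
    obtain ⟨c, t, hct⟩ := List.exists_cons_of_ne_nil (hne a)
    rw [hct, show c :: t = [c] ++ t from rfl, substApp_append]
    intro h
    exact ih c (List.append_eq_nil_iff.mp h).1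

lemma split_exists (μ : A → List A) (n : ℕ) :
    ∀ (w m : List A), m <+: substApp μ n w → m ≠ substApp μ n w →
    ∃ p b r, (p ++ [b]) <+: w ∧ m = substApp μ n p ++ r ∧
      r <+: substApp μ n [b] ∧ r ≠ substApp μ n [b] := by
  intro w
  induction w with
  | nil =>
    intro m h1 h2
    rw [substApp_nil] at h1 h2
    exact absurd (List.prefix_nil.mp h1) h2
  | cons c w' ih =>
    intro m h1 h2
    have hw : substApp μ n (c :: w') = substApp μ n [c] ++ substApp μ n w' := by
      rw [show c :: w' = [c] ++ w' from rfl, substApp_append]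
    rw [hw] at h1 h2
    by_cases hm : substApp μ n [c] <+: m
    · obtain ⟨m', rfl⟩ := hm
      have hm1 : m' <+: substApp μ n w' := (List.prefix_append_right_inj _).mp h1
      have hm2 : m' ≠ substApp μ n w' := fun h => h2 (by rw [h])
      obtain ⟨p, b, r, hpb, hmr, hr, hr'⟩ := ih m' hm1 hm2
      refine ⟨c :: p, b, r, ?_, ?_, hr, hr'⟩
      · exact (List.cons_prefix_cons).mpr ⟨rfl, hpb⟩
      · rw [show c :: p = [c] ++ p from rfl, substApp_append, List.append_assoc, ← hmr]
    · have hmc : m <+: substApp μ n [c] :=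
        (List.prefix_or_prefix_of_prefix h1 (List.prefix_append _ _)).resolve_right hm
      exact ⟨[], c, m, by simp, by rw [substApp_nil]; simp, hmc, fun h => hm (by rw [h])⟩

lemma split_unique_aux (μ : A → List A) (n : ℕ) (w : List A)
    (p1 p2 : List A) (b1 b2 : A) (r1 r2 : List A)
    (h1 : p1 ++ [b1] <+: w) (h2 : p2 ++ [b2] <+: w)
    (heq : substApp μ n p1 ++ r1 = substApp μ n p2 ++ r2)
    (hr1 : r1 <+: substApp μ n [b1]) (hr1' : r1 ≠ substApp μ n [b1])
    (hlen : p1.length ≤ p2.length) :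
    p1 = p2 ∧ b1 = b2 ∧ r1 = r2 := by
  rcases eq_or_lt_of_le hlen with he | hl
  · have hp : p1 = p2 := by
      have h12 : p1 <+: p2 := List.prefix_of_prefix_length_le
        ((List.prefix_append p1 [b1]).trans h1) ((List.prefix_append p2 [b2]).trans h2) hlen
      exact h12.eq_of_length he
    subst hp
    have hb : b1 = b2 := by
      have hpp : p1 ++ [b1] <+: p1 ++ [b2] :=
        List.prefix_of_prefix_length_le h1 h2 (by simp)
      have := hpp.eq_of_length (by simp)
      simpa using this
    subst hb
    exact ⟨rfl, rfl, List.append_cancel_left heq⟩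
  · exfalso
    have hpp : p1 ++ [b1] <+: p2 := List.prefix_of_prefix_length_le h1
      ((List.prefix_append p2 [b2]).trans h2) (by simp; omega)
    obtain ⟨t, ht⟩ := hpp
    have hsub : substApp μ n p2 = substApp μ n p1 ++ (substApp μ n [b1] ++ substApp μ n t) := by
      rw [← ht, substApp_append, substApp_append, List.append_assoc]
    rw [hsub, List.append_assoc] at heq
    have hr1eq : r1 = substApp μ n [b1] ++ (substApp μ n t ++ r2) := by
      have := List.append_cancel_left heq
      rw [this, List.append_assoc]
    have hlen1 : (substApp μ n [b1]).length ≤ r1.length := by rw [hr1eq]; simp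
    have hlen2 : r1.length < (substApp μ n [b1]).length :=
      lt_of_le_of_ne hr1.length_le (fun h => hr1' (hr1.eq_of_length h))
    omega

lemma split_unique (μ : A → List A) (n : ℕ) (w : List A)
    (p1 p2 : List A) (b1 b2 : A) (r1 r2 : List A)
    (h1 : p1 ++ [b1] <+: w) (h2 : p2 ++ [b2] <+: w)
    (heq : substApp μ n p1 ++ r1 = substApp μ n p2 ++ r2)
    (hr1 : r1 <+: substApp μ n [b1]) (hr1' : r1 ≠ substApp μ n [b1])
    (hr2 : r2 <+: substApp μ n [b2]) (hr2' : r2 ≠ substApp μ n [b2]) :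
    p1 = p2 ∧ b1 = b2 ∧ r1 = r2 := by
  rcases le_total p1.length p2.length with h | h
  · exact split_unique_aux μ n w p1 p2 b1 b2 r1 r2 h1 h2 heq hr1 hr1' h
  · obtain ⟨e1, e2, e3⟩ := split_unique_aux μ n w p2 p1 b2 b1 r2 r1 h2 h1 heq.symm hr2 hr2' h
    exact ⟨e1.symm, e2.symm, e3.symm⟩

variable {A : Type*}

lemma dtProd_zero (μ : A → List A) (s : Fin 0 → List A × A) : dtProd μ 0 s = [] := by
  simp [dtProd]

lemma dtProd_succ (μ : A → List A) (k : ℕ) (s : Fin (k+1) → List A × A) :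
    dtProd μ (k+1) s = substApp μ k (s (Fin.last k)).1
      ++ dtProd μ k (fun i => s i.castSucc) := by
  rw [dtProd, List.ofFn_succ']
  simp [dtProd, List.concat_eq_append]

lemma restrict_adm (μ : A → List A) (a : A) (k : ℕ) (s : Fin (k+1) → List A × A)
    (h : LetterAdmissible μ a (k+1) s) :
    LetterAdmissible μ (s (Fin.last k)).2 k (fun i => s i.castSucc) := by
  obtain ⟨h1, _⟩ := h
  refine ⟨?_, ?_⟩
  · intro i hi
    exact h1 ⟨i.val, by omega⟩ hi
  · intro hk
    exact h1 ⟨k, by omega⟩ hk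

lemma snoc_val_lt {k : ℕ} (s' : Fin k → List A × A) (x : List A × A)
    (i : Fin (k+1)) (hik : i.val < k) :
    Fin.snoc (α := fun _ => List A × A) s' x i = s' ⟨i.val, hik⟩ := by
  have h := Fin.snoc_castSucc (α := fun _ => List A × A) (p := s') (x := x) (i := ⟨i.val, hik⟩)
  have h2 : i = Fin.castSucc ⟨i.val, hik⟩ := Fin.ext rfl
  exact (congrArg (Fin.snoc (α := fun _ => List A × A) s' x) h2).trans h

lemma snoc_val_last {k : ℕ} (s' : Fin k → List A × A) (x : List A × A)
    (i : Fin (k+1)) (hik : i.val = k) :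
    Fin.snoc (α := fun _ => List A × A) s' x i = x := by
  have : i = Fin.last k := by ext; exact hik
  rw [this, Fin.snoc_last]

lemma snoc_adm (μ : A → List A) (a : A) (k : ℕ) (s' : Fin k → List A × A)
    (mk : List A) (ak : A) (h' : LetterAdmissible μ ak k s')
    (hp : mk ++ [ak] <+: μ a) :
    LetterAdmissible μ a (k+1) (Fin.snoc s' (mk, ak)) := by
  obtain ⟨h1, h2⟩ := h'
  refine ⟨?_, ?_⟩
  · rintro ⟨iv, ilt⟩ hi
    simp only at hi
    rcases lt_or_eq_of_le (Nat.lt_succ_iff.mp ilt) with hik | hik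
    · rw [snoc_val_lt s' (mk, ak) ⟨iv, ilt⟩ hik,
        snoc_val_lt s' (mk, ak) ⟨iv - 1, by omega⟩ (by simp; omega)]
      exact h1 ⟨iv, hik⟩ hi
    · subst hik
      rw [snoc_val_last s' (mk, ak) ⟨iv, ilt⟩ rfl,
        snoc_val_lt s' (mk, ak) ⟨iv - 1, by omega⟩ (by simp; omega)]
      exact h2 (by omega)
  · intro _
    rw [snoc_val_last s' (mk, ak) ⟨k + 1 - 1, by omega⟩ (by simp)]
    exact hp

lemma snoc_eq_self {k : ℕ} (t : Fin (k+1) → List A × A) :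
    t = Fin.snoc (α := fun _ => List A × A) (fun i => t i.castSucc) (t (Fin.last k)) := by
  funext i
  refine Fin.lastCases ?_ ?_ i
  · rw [Fin.snoc_last]
  · intro j; rw [Fin.snoc_castSucc]


lemma dtProd_proper (μ : A → List A) (hne : ∀ c, μ c ≠ []) :
    ∀ (k : ℕ) (a : A) (s : Fin k → List A × A), LetterAdmissible μ a k s →
      dtProd μ k s <+: substApp μ k [a] ∧ dtProd μ k s ≠ substApp μ k [a] := by
  intro k
  induction k with
  | zero =>
    intro a s _
    rw [dtProd_zero]
    exact ⟨List.nil_prefix, fun h => substApp_singleton_ne_nil μ hne 0 a h.symm⟩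
  | succ k ih =>
    intro a s hs
    obtain ⟨hp, hp'⟩ := ih (s (Fin.last k)).2 _ (restrict_adm μ a k s hs)
    have hxa : (s (Fin.last k)).1 ++ [(s (Fin.last k)).2] <+: μ a := hs.2 (Nat.succ_pos k)
    rw [dtProd_succ]
    have key : substApp μ k (s (Fin.last k)).1 ++ substApp μ k [(s (Fin.last k)).2]
        <+: substApp μ (k+1) [a] := by
      rw [substApp_succ_singleton, ← substApp_append]
      obtain ⟨t, ht⟩ := hxa
      refine ⟨substApp μ k t, ?_⟩
      rw [← ht, substApp_append, substApp_append, substApp_append]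
    refine ⟨((List.prefix_append_right_inj _).mpr hp).trans key, ?_⟩
    intro h
    have l1 : (dtProd μ k fun i => s i.castSucc).length
        < (substApp μ k [(s (Fin.last k)).2]).length :=
      lt_of_le_of_ne hp.length_le (fun h' => hp' (hp.eq_of_length h'))
    have l2 := key.length_le
    have l3 := congrArg List.length h
    simp only [List.length_append] at l2 l3
    omega

end AuxLemmas

/-- Lemma 2.11: if `m` is a proper prefix of `μ^k(a)`, then there is a unique
`a`-admissible sequence `((m_i, a_i))_{i=0,...,k-1}` with
`m = μ^{k-1}(m_{k-1}) ⋯ μ^0(m_0)`. -/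
theorem stmt5 {A : Type*} (μ : A → List A) (hne : ∀ c, μ c ≠ []) (k : ℕ)
    (m : List A) (a : A) (hpref : m <+: substApp μ k [a]) (hproper : m ≠ substApp μ k [a]) :
    ∃! s : Fin k → List A × A, LetterAdmissible μ a k s ∧ m = dtProd μ k s := by
  induction k generalizing m a with
  | zero =>
    have h0 : substApp μ 0 [a] = [a] := rfl
    rw [h0] at hpref hproper
    have hm : m = [] := by
      rcases hpref with ⟨t, ht⟩
      cases m with
      | nil => rfl
      | cons c m' =>
        exfalso
        simp only [List.cons_append, List.cons.injEq] at ht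
        obtain ⟨rfl, ht2⟩ := ht
        obtain ⟨rfl, rfl⟩ := List.append_eq_nil_iff.mp ht2
        exact hproper rfl
    refine ⟨fun i => i.elim0, ⟨⟨fun i => i.elim0, fun h => absurd h (by omega)⟩,
      by rw [hm, dtProd_zero]⟩, ?_⟩
    intro t _
    funext i
    exact i.elim0
  | succ k ih =>
    rw [substApp_succ_singleton] at hpref hproper
    obtain ⟨mk, ak, r, hsplit, hm, hr, hrne⟩ := split_exists μ k (μ a) m hpref hproper
    obtain ⟨s', ⟨hs'adm, hs'eq⟩, hs'uniq⟩ := ih r ak hr hrne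
    refine ⟨Fin.snoc s' (mk, ak), ⟨snoc_adm μ a k s' mk ak ⟨hs'adm.1, hs'adm.2⟩ hsplit, ?_⟩, ?_⟩
    · rw [dtProd_succ, Fin.snoc_last]
      have hfun : (fun i : Fin k => Fin.snoc (α := fun _ => List A × A) s' (mk, ak) i.castSucc)
          = s' := by
        funext i; rw [Fin.snoc_castSucc]
      rw [hfun, hm, hs'eq]
    · rintro t ⟨htadm, hteq⟩
      have hrt := restrict_adm μ a k t htadm
      obtain ⟨hdp, hdp'⟩ := dtProd_proper μ hne k (t (Fin.last k)).2 _ hrt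
      have hxt : (t (Fin.last k)).1 ++ [(t (Fin.last k)).2] <+: μ a := htadm.2 (Nat.succ_pos k)
      rw [dtProd_succ] at hteq
      obtain ⟨e1, e2, e3⟩ := split_unique μ k (μ a) (t (Fin.last k)).1 mk
        (t (Fin.last k)).2 ak (dtProd μ k fun i => t i.castSucc) r hxt hsplit
        (hteq.symm.trans hm) hdp hdp' hr hrne
      have hs : (fun i => t i.castSucc) = s' := by
        apply hs'uniq
        refine ⟨?_, e3.symm⟩
        rw [← e2]
        exact hrt
      have hlast : t (Fin.last k) = (mk, ak) := by rw [← e1, ← e2]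
      conv_lhs => rw [snoc_eq_self t]
      rw [hs, hlast]
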